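/- For every ε > 0 there exists n₀ such that for every n ≥ n₀, m(n, n−1) > log₂ n + (1/2)·log₂ log₂ n + (1/2)·log₂(π/2) − ε. -/

import Mathlib

open Finset Filter

/-- The line determined by two vertices `u`, `v` in a hypergraph with edge set `H`:
`{u, v} ∪ {p : ∃ T ∈ H, {u, v, p} ⊆ T}`. -/
def hline {V : Type*} [Fintype V] [DecidableEq V] (H : Finset (Finset V)) (u v : V) :
    Finset V :=
  {u, v} ∪ Finset.univ.filter (fun p => ∃ T ∈ H, ({u, v, p} : Finset V) ⊆ T)

/-- The set of all lines of a hypergraph. -/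
def hlines {V : Type*} [Fintype V] [DecidableEq V] (H : Finset (Finset V)) :
    Finset (Finset V) :=
  ((Finset.univ ×ˢ Finset.univ).filter (fun p : V × V => p.1 ≠ p.2)).image
    (fun p => hline H p.1 p.2)

/-- `mValue n k` is the smallest number of distinct lines in a hypergraph on `n`
vertices in which every line consists of at most `k` vertices. -/
noncomputable def mValue (n k : ℕ) : ℕ :=
  sInf { m | ∃ H : Finset (Finset (Fin n)),
    (∀ u v : Fin n, u ≠ v → (hline H u v).card ≤ k) ∧ (hlines H).card = m }

lemma mem_hline {V : Type*} [Fintype V] [DecidableEq V] (H : Finset (Finset V)) (u v p : V) :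
    p ∈ hline H u v ↔ p = u ∨ p = v ∨ ∃ T ∈ H, ({u, v, p} : Finset V) ⊆ T := by
  simp [hline]

lemma hline_mem_hlines {V : Type*} [Fintype V] [DecidableEq V] (H : Finset (Finset V))
    {u v : V} (h : u ≠ v) : hline H u v ∈ hlines H := by
  apply Finset.mem_image.2
  exact ⟨(u, v), by simp [h], rfl⟩

lemma not_subset_lines {V : Type*} [Fintype V] [DecidableEq V] (H : Finset (Finset V))
    (hcard : ∀ u v : V, u ≠ v → (hline H u v).card < Fintype.card V)
    {u v : V} (huv : u ≠ v)
    (hsub : (Finset.univ.filter (fun L : {L // L ∈ hlines H} => u ∈ L.1)) ⊆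
      (Finset.univ.filter (fun L : {L // L ∈ hlines H} => v ∈ L.1))) : False := by
  have hne : hline H u v ≠ Finset.univ := by
    intro h
    have := hcard u v huv
    rw [h, Finset.card_univ] at this
    exact lt_irrefl _ this
  obtain ⟨w, hw⟩ : ∃ w, w ∉ hline H u v := by
    by_contra hc
    push_neg at hc
    exact hne (Finset.eq_univ_iff_forall.2 hc)
  have hvw : v ≠ w := fun h => hw (by rw [← h]; exact (mem_hline H u v v).2 (Or.inr (Or.inl rfl)))
  have huw : u ≠ w := fun h => hw (by rw [← h]; exact (mem_hline H u v u).2 (Or.inl rfl))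
  have h1 : (⟨hline H u w, hline_mem_hlines H huw⟩ : {L // L ∈ hlines H}) ∈
      Finset.univ.filter (fun L : {L // L ∈ hlines H} => u ∈ L.1) := by
    simp [mem_hline]
  have h2 := hsub h1
  simp only [Finset.mem_filter] at h2
  have h3 : v ∈ hline H u w := h2.2
  rcases (mem_hline H u w v).1 h3 with h | h | ⟨T, hT, hsubT⟩
  · exact huv h.symm
  · exact hvw h
  · apply hw
    refine (mem_hline H u v w).2 (Or.inr (Or.inr ⟨T, hT, ?_⟩))
    intro x hx
    apply hsubT
    simp only [Finset.mem_insert, Finset.mem_singleton] at hx ⊢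
    tauto

lemma sperner_step {V : Type*} [Fintype V] [DecidableEq V] (H : Finset (Finset V))
    (hcard : ∀ u v : V, u ≠ v → (hline H u v).card < Fintype.card V) :
    Fintype.card V ≤ ((hlines H).card).choose ((hlines H).card / 2) := by
  classical
  set α := {L // L ∈ hlines H}
  let S : V → Finset α := fun v => Finset.univ.filter (fun L : α => v ∈ L.1)
  have hkey : ∀ u v : V, u ≠ v → ¬ (S u ⊆ S v) := fun u v huv hs =>
    not_subset_lines H hcard huv hs
  have hinj : Function.Injective S := by
    intro u v h
    by_contra hne
    exact hkey u v hne (le_of_eq h)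
  have hanti : IsAntichain (· ⊆ ·) ((Finset.univ.image S : Finset (Finset α)) : Set (Finset α)) := by
    intro a ha b hb hab hsub
    simp only [Finset.coe_image, Set.mem_image] at ha hb
    obtain ⟨u, -, rfl⟩ := ha
    obtain ⟨v, -, rfl⟩ := hb
    exact hkey u v (fun h => hab (by rw [h])) hsub
  have := IsAntichain.sperner hanti
  rwa [Finset.card_image_of_injective _ hinj, Finset.card_univ, Fintype.card_coe] at this

lemma stirling_ratio (k : ℕ) (hk : 1 ≤ k) :
    Stirling.stirlingSeq (2*k) / (Stirling.stirlingSeq k)^2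
      = (Nat.centralBinom k : ℝ) * Real.sqrt k / 4^k := by
  have hkpos : (0:ℝ) < k := by exact_mod_cast hk
  have hx : (0:ℝ) < Real.sqrt k := Real.sqrt_pos.2 hkpos
  have hxsq : (Real.sqrt k)^2 = (k:ℝ) := Real.sq_sqrt hkpos.le
  have he : (0:ℝ) < Real.exp 1 := Real.exp_pos 1
  have hE : (0:ℝ) < ((k:ℝ)/Real.exp 1)^k := by positivity
  have hfact : ((Nat.factorial (2*k) : ℕ) : ℝ) = (Nat.centralBinom k : ℝ) *
      ((Nat.factorial k : ℝ) * (Nat.factorial k : ℝ)) := by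
    have h := Nat.choose_mul_factorial_mul_factorial (show k ≤ 2*k by omega)
    rw [show 2*k-k = k by omega] at h
    rw [Nat.centralBinom]
    exact_mod_cast (h.symm.trans (by ring))
  have hs1 : Real.sqrt (2*((2*k : ℕ):ℝ)) = 2 * Real.sqrt k := by
    push_cast
    rw [show (2:ℝ)*(2*(k:ℝ)) = 4*k by ring, Real.sqrt_mul (by norm_num : (0:ℝ) ≤ 4),
      show (4:ℝ) = 2^2 by norm_num, Real.sqrt_sq (by norm_num : (0:ℝ) ≤ 2)]
  have hs2 : Real.sqrt (2*((k : ℕ):ℝ)) = Real.sqrt 2 * Real.sqrt k := by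
    rw [Real.sqrt_mul (by norm_num : (0:ℝ) ≤ 2)]
  have hpow : (((2*k : ℕ):ℝ)/Real.exp 1)^(2*k) = 4^k * (((k:ℝ)/Real.exp 1)^k)^2 := by
    push_cast
    rw [show (2*(k:ℝ))/Real.exp 1 = 2 * ((k:ℝ)/Real.exp 1) by ring, mul_pow,
      show (2:ℝ)^(2*k) = 4^k by rw [pow_mul]; norm_num,
      show (2:ℕ)*k = k*2 by ring, pow_mul]
  rw [Stirling.stirlingSeq, Stirling.stirlingSeq, hs1, hs2, hpow, hfact]
  have hs2pos : (0:ℝ) < Real.sqrt 2 := Real.sqrt_pos.2 (by norm_num)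
  have hfk : (0:ℝ) < (Nat.factorial k : ℝ) := by exact_mod_cast k.factorial_pos
  field_simp
  ring_nf
  rw [Real.sq_sqrt (by norm_num : (0:ℝ) ≤ 2)]

lemma tendsto_cb :
    Tendsto (fun k => (Nat.centralBinom k : ℝ) * Real.sqrt k / 4^k) atTop
      (nhds ((Real.sqrt Real.pi)⁻¹)) := by
  have h := Stirling.tendsto_stirlingSeq_sqrt_pi
  have h2 : Tendsto (fun k => Stirling.stirlingSeq (2*k)) atTop (nhds (Real.sqrt Real.pi)) :=
    h.comp (Filter.tendsto_atTop_mono (fun n => Nat.le_mul_of_pos_left n two_pos)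
      Filter.tendsto_id)
  have hπ : (0:ℝ) < Real.pi := Real.pi_pos
  have h3 : Tendsto (fun k => Stirling.stirlingSeq (2*k) / (Stirling.stirlingSeq k)^2) atTop
      (nhds (Real.sqrt Real.pi / (Real.sqrt Real.pi)^2)) :=
    h2.div (h.pow 2) (by positivity)
  have heq : Real.sqrt Real.pi / (Real.sqrt Real.pi)^2 = (Real.sqrt Real.pi)⁻¹ := by
    have : (0:ℝ) < Real.sqrt Real.pi := Real.sqrt_pos.2 Real.pi_pos
    field_simp
  rw [heq] at h3
  refine h3.congr' ?_
  filter_upwards [eventually_ge_atTop 1] with k hk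
  exact stirling_ratio k hk

lemma choose_sqrt_bound (c : ℝ) (K : ℕ)
    (hK : ∀ k ≥ K, (Nat.centralBinom k : ℝ) * Real.sqrt k / 4^k ≤ c)
    (m : ℕ) (hm : 2*K + 2 ≤ m) :
    (m.choose (m/2) : ℝ) * Real.sqrt ((m:ℝ)/2) ≤ c * 2^m := by
  have h4 : ∀ k, K ≤ k → (Nat.centralBinom k : ℝ) * Real.sqrt k ≤ c * 4^k := by
    intro k hk
    have := hK k hk
    rw [div_le_iff₀ (by positivity)] at this
    linarith
  rcases Nat.even_or_odd m with ⟨k, hk⟩ | ⟨k, hk⟩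
  · have hm2 : m = 2*k := by omega
    have hdiv : m/2 = k := by omega
    have hcb : m.choose (m/2) = Nat.centralBinom k := by
      rw [hdiv, hm2, Nat.centralBinom]
    have hsq : Real.sqrt ((m:ℝ)/2) = Real.sqrt k := by
      congr 1
      rw [hm2]; push_cast; ring
    have h2m : (2:ℝ)^m = 4^k := by
      rw [hm2, pow_mul]; norm_num
    rw [hcb, hsq, h2m]
    exact h4 k (by omega)
  · have hdiv : m/2 = k := by omega
    have hsymm : (2*k+1).choose (k+1) = (2*k+1).choose k := by
      rw [← Nat.choose_symm (by omega : k+1 ≤ 2*k+1)]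
      congr 1
      omega
    have hcb : 2 * m.choose (m/2) = Nat.centralBinom (k+1) := by
      rw [hdiv, hk, Nat.centralBinom,
        show 2*(k+1) = (2*k+1)+1 by ring, Nat.choose_succ_succ]
      simp only [Nat.succ_eq_add_one]
      rw [hsymm]
      ring
    have e1 : ((m.choose (m/2)):ℝ) = (Nat.centralBinom (k+1):ℝ)/2 := by
      rw [eq_div_iff (two_ne_zero)]
      exact_mod_cast (by omega : m.choose (m/2) * 2 = Nat.centralBinom (k+1))
    have hsq : Real.sqrt ((m:ℝ)/2) ≤ Real.sqrt ((k:ℝ)+1) := by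
      apply Real.sqrt_le_sqrt
      rw [hk]; push_cast; linarith
    have h1 := h4 (k+1) (by omega)
    have h4k : (4:ℝ)^(k+1) = 2 * 2^m := by
      rw [hk, show (4:ℝ) = 2^2 by norm_num, ← pow_mul]
      ring
    calc (m.choose (m/2):ℝ) * Real.sqrt ((m:ℝ)/2)
        ≤ (m.choose (m/2):ℝ) * Real.sqrt ((k:ℝ)+1) := by
          gcongr
      _ = (Nat.centralBinom (k+1):ℝ) * Real.sqrt ((k:ℝ)+1) / 2 := by
          rw [e1]; ring
      _ ≤ c * 4^(k+1) / 2 := by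
          have : (Nat.centralBinom (k+1):ℝ) * Real.sqrt (((k+1:ℕ)):ℝ) ≤ c * 4^(k+1) := h1
          push_cast at this
          linarith
      _ = c * 2^m := by rw [h4k]; ring

/-- For every `ε > 0` there is `n₀` such that for all `n ≥ n₀`,
`m(n, n-1) > log₂ n + (1/2) log₂ log₂ n + (1/2) log₂ (π/2) - ε`. -/
theorem stmt_5 (ε : ℝ) (hε : 0 < ε) : ∃ n₀ : ℕ, ∀ n : ℕ, n₀ ≤ n →
    (mValue n (n - 1) : ℝ) >
      Real.logb 2 n + (1 / 2) * Real.logb 2 (Real.logb 2 n)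
        + (1 / 2) * Real.logb 2 (Real.pi / 2) - ε := by
  have hπ : (0:ℝ) < Real.pi := Real.pi_pos
  have hsπ : (0:ℝ) < Real.sqrt Real.pi := Real.sqrt_pos.2 hπ
  set A : ℝ := (2:ℝ) ^ (ε/2 : ℝ) with hA_def
  have hA1 : 1 < A := by
    rw [hA_def]
    exact (Real.one_lt_rpow_iff_of_pos (by norm_num)).2 (Or.inl ⟨one_lt_two, by positivity⟩)
  have hc : (Real.sqrt Real.pi)⁻¹ < (Real.sqrt Real.pi)⁻¹ * A :=
    lt_mul_of_one_lt_right (by positivity) hA1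
  obtain ⟨K, hK⟩ := Filter.eventually_atTop.1 (tendsto_cb.eventually_lt_const hc)
  set M : ℕ := 2*K + 2 with hM_def
  refine ⟨max (2^M) 3, fun n hn => ?_⟩
  have hn3 : 3 ≤ n := le_trans (le_max_right _ _) hn
  have hnM : 2^M ≤ n := le_trans (le_max_left _ _) hn
  set m := mValue n (n-1) with hm_def
  -- the infimum is attained
  have hmem : m ∈ { m | ∃ H : Finset (Finset (Fin n)),
      (∀ u v : Fin n, u ≠ v → (hline H u v).card ≤ n-1) ∧ (hlines H).card = m } := by
    apply Nat.sInf_mem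
    refine ⟨(hlines (∅ : Finset (Finset (Fin n)))).card, ∅, fun u v huv => ?_, rfl⟩
    have : hline (∅ : Finset (Finset (Fin n))) u v = {u, v} := by simp [hline]
    rw [this, Finset.card_pair huv]
    omega
  obtain ⟨H, hH, hHm⟩ := hmem
  have hchoose : n ≤ m.choose (m/2) := by
    have h := sperner_step H (fun u v huv => by
      have := hH u v huv
      rw [Fintype.card_fin]
      omega)
    rwa [Fintype.card_fin, hHm] at h
  have h2pow : n ≤ 2^m := by
    refine hchoose.trans ?_
    calc m.choose (m/2) ≤ ∑ i ∈ Finset.range (m+1), m.choose i :=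
          Finset.single_le_sum (fun i _ => Nat.zero_le _) (Finset.mem_range.2 (by omega))
      _ = 2^m := Nat.sum_range_choose m
  have hb1 : (1:ℝ) < 2 := one_lt_two
  have hlog2 : ∀ j : ℕ, Real.logb 2 ((2:ℝ)^j) = j := by
    intro j
    rw [Real.logb_pow, Real.logb_self_eq_one hb1, mul_one]
  have hn_pos : (0:ℝ) < n := by positivity
  have hlogn_le : Real.logb 2 n ≤ m := by
    calc Real.logb 2 n ≤ Real.logb 2 ((2:ℝ)^m) := by
          apply Real.logb_le_logb_of_le hb1 hn_pos
          exact_mod_cast h2pow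
      _ = m := hlog2 m
  have hlogn_pos : 0 < Real.logb 2 n := Real.logb_pos hb1 (by exact_mod_cast (by omega : 1 < n))
  have hMm : M ≤ m := by
    have h1 : (M:ℝ) ≤ Real.logb 2 n := by
      rw [← hlog2 M]
      apply Real.logb_le_logb_of_le hb1 (by positivity)
      exact_mod_cast hnM
    exact_mod_cast h1.trans hlogn_le
  have hm_pos : (0:ℝ) < m := by
    have : 2 ≤ m := le_trans (by omega) hMm
    exact_mod_cast (by omega : 0 < m)
  -- key bound
  have hkey : (m.choose (m/2) : ℝ) * Real.sqrt ((m:ℝ)/2) ≤ (Real.sqrt Real.pi)⁻¹ * A * 2^m :=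
    choose_sqrt_bound _ K (fun k hk => (hK k hk).le) m (by omega)
  have hineq : (n:ℝ) * Real.sqrt ((m:ℝ)/2) ≤ (Real.sqrt Real.pi)⁻¹ * A * 2^m := by
    refine le_trans ?_ hkey
    have : (n:ℝ) ≤ (m.choose (m/2) : ℝ) := by exact_mod_cast hchoose
    gcongr
  have hsqrt_pos : (0:ℝ) < Real.sqrt ((m:ℝ)/2) := Real.sqrt_pos.2 (by positivity)
  have hL := Real.logb_le_logb_of_le hb1 (by positivity) hineq
  -- sqrt log lemma
  have hlogsqrt : ∀ x : ℝ, 0 < x → Real.logb 2 (Real.sqrt x) = Real.logb 2 x / 2 := by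
    intro x hx
    rw [Real.logb, Real.log_sqrt hx.le, Real.logb]
    ring
  rw [Real.logb_mul (by positivity) (by positivity),
    Real.logb_mul (by positivity) (by positivity),
    Real.logb_mul (by positivity) (by positivity)] at hL
  rw [hlogsqrt _ (by positivity), Real.logb_div (by positivity) (by norm_num),
    Real.logb_self_eq_one hb1, Real.logb_inv, hlogsqrt _ hπ, hA_def,
    Real.logb_rpow (by norm_num) (by norm_num), hlog2 m] at hL
  -- hL : logb 2 n + (logb 2 m - 1)/2 ≤ -(logb 2 π / 2) + ε/2 + m
  have hloglog : Real.logb 2 (Real.logb 2 n) ≤ Real.logb 2 (m:ℝ) :=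
    Real.logb_le_logb_of_le hb1 hlogn_pos hlogn_le
  have hpidiv : Real.logb 2 (Real.pi / 2) = Real.logb 2 Real.pi - 1 := by
    rw [Real.logb_div (by positivity) (by norm_num), Real.logb_self_eq_one hb1]
  rw [hpidiv]
  linarith
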